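/- Let θ ∈ (0, π/2) and let u be a model eigenfunction of H(θ) with eigenvalue σ. Then ∫_{ℝ²₊} |∂_s u|² ds dt = − sin θ · ∫_{ℝ²₊} s V_θ(s,t) u(s,t)² ds dt. -/

import Mathlib

open Real MeasureTheory Set

noncomputable section

/-- Partial derivative with respect to the first variable. -/
def pd1 (u : ℝ → ℝ → ℝ) : ℝ → ℝ → ℝ := fun s t => deriv (fun x => u x t) s

/-- Partial derivative with respect to the second variable. -/
def pd2 (u : ℝ → ℝ → ℝ) : ℝ → ℝ → ℝ := fun s t => deriv (fun y => u s y) t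

/-- The potential `V_θ(s,t) = t cos θ − s sin θ`. -/
def Vpot (θ : ℝ) : ℝ → ℝ → ℝ := fun s t => t * Real.cos θ - s * Real.sin θ

/-- The operator `H(θ) = −∂_s² − ∂_t² + V_θ²` applied to `u`. -/
def Hop (θ : ℝ) (u : ℝ → ℝ → ℝ) : ℝ → ℝ → ℝ :=
  fun s t => - pd1 (pd1 u) s t - pd2 (pd2 u) s t + (Vpot θ s t)^2 * u s t

/-- Integral over the half-plane `{t > 0}` with respect to `ds dt`. -/
def intHalf (f : ℝ → ℝ → ℝ) : ℝ := ∫ s : ℝ, ∫ t in Set.Ioi (0:ℝ), f s t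

/-- Schwartz-class on the closed half-plane: all iterated partial derivatives decay
faster than any power of `|s| + t`. -/
def SchwartzHalf (u : ℝ → ℝ → ℝ) : Prop :=
  ∀ k l n : ℕ, ∃ C : ℝ, ∀ s t : ℝ, 0 ≤ t →
    |pd1^[k] (pd2^[l] u) s t| ≤ C * (1 + |s| + t) ^ (-(n:ℝ))

/-- A model eigenfunction of `H(θ)` with eigenvalue `σ`: smooth up to the boundary,
Schwartz-class, `L²`-normalized, Neumann boundary condition, and `H(θ)u = σu` on `{t ≥ 0}`. -/
structure IsModelEigen (θ : ℝ) (u : ℝ → ℝ → ℝ) (σ : ℝ) : Prop where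
  smooth : ∀ n : ℕ, ContDiff ℝ n (fun p : ℝ × ℝ => u p.1 p.2)
  schwartz : SchwartzHalf u
  normalized : intHalf (fun s t => (u s t)^2) = 1
  neumann : ∀ s : ℝ, pd2 u s 0 = 0
  eigen : ∀ s t : ℝ, 0 ≤ t → Hop θ u s t = σ * u s t

namespace VirialAux

open Filter Topology

/-! ### Decay framework -/

/-- decay of all polynomial orders on the closed half plane -/
def Decay (f : ℝ → ℝ → ℝ) : Prop :=
  ∀ n : ℕ, ∃ C : ℝ, 0 ≤ C ∧ ∀ s t : ℝ, 0 ≤ t → |f s t| ≤ C * (1 + |s| + t) ^ (-(n : ℝ))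

variable {f g : ℝ → ℝ → ℝ}

lemma base_one_le {s t : ℝ} (ht : 0 ≤ t) : (1:ℝ) ≤ 1 + |s| + t := by
  have := abs_nonneg s; linarith

lemma base_pos {s t : ℝ} (ht : 0 ≤ t) : (0:ℝ) < 1 + |s| + t :=
  lt_of_lt_of_le one_pos (base_one_le ht)

lemma Decay.congr (hd : Decay f) (h : ∀ s t, f s t = g s t) : Decay g := by
  intro n; obtain ⟨C, hC0, hC⟩ := hd n
  exact ⟨C, hC0, fun s t ht => by rw [← h s t]; exact hC s t ht⟩

lemma Decay.add (hf : Decay f) (hg : Decay g) : Decay (fun s t => f s t + g s t) := by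
  intro n
  obtain ⟨C1, h10, h1⟩ := hf n; obtain ⟨C2, h20, h2⟩ := hg n
  refine ⟨C1 + C2, by positivity, fun s t ht => ?_⟩
  calc |f s t + g s t| ≤ |f s t| + |g s t| := abs_add_le _ _
    _ ≤ C1 * (1 + |s| + t) ^ (-(n : ℝ)) + C2 * (1 + |s| + t) ^ (-(n : ℝ)) :=
        add_le_add (h1 s t ht) (h2 s t ht)
    _ = (C1 + C2) * (1 + |s| + t) ^ (-(n : ℝ)) := by ring

lemma Decay.const_mul (c : ℝ) (hf : Decay f) : Decay (fun s t => c * f s t) := by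
  intro n
  obtain ⟨C, hC0, hC⟩ := hf n
  refine ⟨|c| * C, by positivity, fun s t ht => ?_⟩
  rw [abs_mul, mul_assoc]
  exact mul_le_mul_of_nonneg_left (hC s t ht) (abs_nonneg c)

lemma Decay.bounded (hf : Decay f) : ∃ C : ℝ, 0 ≤ C ∧ ∀ s t : ℝ, 0 ≤ t → |f s t| ≤ C := by
  obtain ⟨C, hC0, hC⟩ := hf 0
  refine ⟨C, hC0, fun s t ht => ?_⟩
  have := hC s t ht
  simpa using this

lemma Decay.mul (hf : Decay f) (hg : Decay g) : Decay (fun s t => f s t * g s t) := by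
  intro n
  obtain ⟨C1, h10, h1⟩ := hf n
  obtain ⟨C2, h20, h2⟩ := hg.bounded
  refine ⟨C1 * C2, by positivity, fun s t ht => ?_⟩
  rw [abs_mul]
  calc |f s t| * |g s t| ≤ (C1 * (1 + |s| + t) ^ (-(n : ℝ))) * C2 :=
        mul_le_mul (h1 s t ht) (h2 s t ht) (abs_nonneg _) (by positivity)
    _ = C1 * C2 * (1 + |s| + t) ^ (-(n : ℝ)) := by ring

lemma Decay.mul_wt {w : ℝ → ℝ → ℝ} (hw : ∀ s t, 0 ≤ t → |w s t| ≤ 1 + |s| + t)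
    (hf : Decay f) : Decay (fun s t => w s t * f s t) := by
  intro n
  obtain ⟨C, hC0, hC⟩ := hf (n + 1)
  refine ⟨C, hC0, fun s t ht => ?_⟩
  have hx0 := base_pos (s := s) ht
  have key : (1 + |s| + t) ^ (-(n : ℝ)) = (1 + |s| + t) * (1 + |s| + t) ^ (-((n + 1 : ℕ) : ℝ)) := by
    rw [show (-((n + 1 : ℕ) : ℝ)) = (-(n : ℝ)) + (-1) by push_cast; ring,
      Real.rpow_add hx0, Real.rpow_neg_one]
    field_simp
  rw [abs_mul, key]
  calc |w s t| * |f s t| ≤ (1 + |s| + t) * (C * (1 + |s| + t) ^ (-((n + 1 : ℕ) : ℝ))) :=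
        mul_le_mul (hw s t ht) (hC s t ht) (abs_nonneg _) (le_of_lt hx0)
    _ = C * ((1 + |s| + t) * (1 + |s| + t) ^ (-((n + 1 : ℕ) : ℝ))) := by ring

lemma Decay.mul_s (hf : Decay f) : Decay (fun s t => s * f s t) :=
  Decay.mul_wt (fun s t ht => by have := abs_nonneg s; linarith [le_abs_self s, abs_nonneg s]) hf

lemma abs_V_le (θ : ℝ) : ∀ s t : ℝ, 0 ≤ t → |Vpot θ s t| ≤ 1 + |s| + t := by
  intro s t ht
  have h1 : |t * Real.cos θ| ≤ t := by
    rw [abs_mul, abs_of_nonneg ht]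
    nlinarith [abs_cos_le_one θ, abs_nonneg (Real.cos θ)]
  have h2 : |s * Real.sin θ| ≤ |s| := by
    rw [abs_mul]
    nlinarith [abs_sin_le_one θ, abs_nonneg s, abs_nonneg (Real.sin θ)]
  calc |Vpot θ s t| ≤ |t * Real.cos θ| + |s * Real.sin θ| := abs_sub _ _
    _ ≤ 1 + |s| + t := by linarith

lemma Decay.mul_V (θ : ℝ) (hf : Decay f) : Decay (fun s t => Vpot θ s t * f s t) :=
  Decay.mul_wt (abs_V_le θ) hf

/-! ### Integrability from decay -/

lemma pow4_bound {s t : ℝ} (ht : 0 ≤ t) :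
    (1 + |s| + t) ^ (-((4 : ℕ) : ℝ)) ≤ (1 + s ^ 2)⁻¹ * (1 + t ^ 2)⁻¹ := by
  have hx0 := base_pos (s := s) ht
  have h4 : (1 + |s| + t) ^ (-((4 : ℕ) : ℝ)) = ((1 + |s| + t) ^ (4 : ℕ))⁻¹ := by
    rw [← Real.rpow_natCast (1 + |s| + t) 4, ← Real.rpow_neg hx0.le]
  rw [h4, ← mul_inv]
  have ha := abs_nonneg s
  have hsa : |s| ^ 2 = s ^ 2 := sq_abs s
  have key : (1 + s ^ 2) * (1 + t ^ 2) ≤ (1 + |s| + t) ^ 4 := by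
    nlinarith [sq_nonneg (|s| * t), sq_nonneg (|s| + t), sq_nonneg (|s| - t), mul_nonneg ha ht]
  exact inv_anti₀ (by positivity) key

lemma integrable_dom :
    Integrable (fun p : ℝ × ℝ => (1 + p.1 ^ 2)⁻¹ * (1 + p.2 ^ 2)⁻¹)
      ((volume : Measure ℝ).prod ((volume : Measure ℝ).restrict (Ioi 0))) :=
  integrable_inv_one_add_sq.mul_prod (integrable_inv_one_add_sq.restrict)

lemma Decay.bound4 (hd : Decay f) :
    ∃ C : ℝ, 0 ≤ C ∧ ∀ s t : ℝ, 0 ≤ t → |f s t| ≤ C * ((1 + s ^ 2)⁻¹ * (1 + t ^ 2)⁻¹) := by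
  obtain ⟨C, hC0, hC⟩ := hd 4
  exact ⟨C, hC0, fun s t ht => (hC s t ht).trans
    (mul_le_mul_of_nonneg_left (pow4_bound ht) hC0)⟩

lemma Decay.integrable_prod (hd : Decay f)
    (hc : Continuous fun p : ℝ × ℝ => f p.1 p.2) :
    Integrable (fun p : ℝ × ℝ => f p.1 p.2)
      ((volume : Measure ℝ).prod ((volume : Measure ℝ).restrict (Ioi 0))) := by
  obtain ⟨C, hC0, hC⟩ := hd.bound4
  refine (integrable_dom.const_mul C).mono' hc.aestronglyMeasurable ?_
  have hrest : (volume : Measure ℝ).prod ((volume : Measure ℝ).restrict (Ioi 0))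
      = ((volume : Measure ℝ).prod (volume : Measure ℝ)).restrict (univ ×ˢ Ioi 0) := by
    rw [← Measure.prod_restrict, Measure.restrict_univ]
  rw [hrest]
  filter_upwards [ae_restrict_mem (MeasurableSet.univ.prod measurableSet_Ioi)] with p hp
  have ht : (0:ℝ) ≤ p.2 := le_of_lt hp.2
  simpa [Real.norm_eq_abs, mul_assoc] using hC p.1 p.2 ht

lemma Decay.integrableOn_inner (hd : Decay f)
    (hc : Continuous fun p : ℝ × ℝ => f p.1 p.2) (s : ℝ) :
    IntegrableOn (fun t => f s t) (Ioi (0:ℝ)) := by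
  obtain ⟨C, hC0, hC⟩ := hd.bound4
  have hcs : Continuous fun t => f s t := hc.comp (Continuous.prodMk_right s)
  refine ((integrable_inv_one_add_sq.restrict (s := Ioi 0)).const_mul C).mono'
    hcs.aestronglyMeasurable.restrict ?_
  filter_upwards [ae_restrict_mem measurableSet_Ioi] with t htt
  have ht : (0:ℝ) ≤ t := le_of_lt htt
  have h1 : (1 + s ^ 2)⁻¹ * (1 + t ^ 2)⁻¹ ≤ (1 + t ^ 2)⁻¹ := by
    have h2 : (1 + s ^ 2)⁻¹ ≤ 1 := by
      rw [inv_le_one_iff₀]; right; nlinarith [sq_nonneg s]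
    nlinarith [inv_nonneg.mpr (by positivity : (0:ℝ) ≤ 1 + t ^ 2)]
  rw [Real.norm_eq_abs]
  calc |f s t| ≤ C * ((1 + s ^ 2)⁻¹ * (1 + t ^ 2)⁻¹) := hC s t ht
    _ ≤ C * (1 + t ^ 2)⁻¹ := mul_le_mul_of_nonneg_left h1 hC0

lemma Decay.integrable_line (hd : Decay f)
    (hc : Continuous fun p : ℝ × ℝ => f p.1 p.2) {t : ℝ} (ht : 0 ≤ t) :
    Integrable (fun s => f s t) := by
  obtain ⟨C, hC0, hC⟩ := hd.bound4
  have hcs : Continuous fun s => f s t := hc.comp (continuous_id.prodMk continuous_const)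
  refine (integrable_inv_one_add_sq.const_mul C).mono' hcs.aestronglyMeasurable ?_
  refine Eventually.of_forall fun s => ?_
  have h1 : (1 + s ^ 2)⁻¹ * (1 + t ^ 2)⁻¹ ≤ (1 + s ^ 2)⁻¹ := by
    have h2 : (1 + t ^ 2)⁻¹ ≤ 1 := by
      rw [inv_le_one_iff₀]; right; nlinarith [sq_nonneg t]
    nlinarith [inv_nonneg.mpr (by positivity : (0:ℝ) ≤ 1 + s ^ 2)]
  rw [Real.norm_eq_abs]
  calc |f s t| ≤ C * ((1 + s ^ 2)⁻¹ * (1 + t ^ 2)⁻¹) := hC s t ht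
    _ ≤ C * (1 + s ^ 2)⁻¹ := mul_le_mul_of_nonneg_left h1 hC0

lemma Decay.bound1 (hd : Decay f) :
    ∃ C : ℝ, 0 ≤ C ∧ ∀ s t : ℝ, 0 ≤ t → |f s t| ≤ C * (1 + |s| + t)⁻¹ := by
  obtain ⟨C, hC0, hC⟩ := hd 1
  refine ⟨C, hC0, fun s t ht => ?_⟩
  have := hC s t ht
  rwa [show (-((1:ℕ):ℝ)) = -1 by norm_num, Real.rpow_neg_one] at this

lemma Decay.tendsto_s (hd : Decay f) {l : Filter ℝ}
    (habs : Tendsto (fun s : ℝ => |s|) l atTop) {t : ℝ} (ht : 0 ≤ t) :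
    Tendsto (fun s => f s t) l (𝓝 0) := by
  obtain ⟨C, hC0, hC⟩ := hd.bound1
  refine squeeze_zero_norm (a := fun s => C * (1 + |s| + t)⁻¹)
    (fun s => by rw [Real.norm_eq_abs]; exact hC s t ht) ?_
  have h1 : Tendsto (fun s : ℝ => 1 + |s| + t) l atTop :=
    tendsto_atTop_add_const_right l t (tendsto_atTop_add_const_left l 1 habs)
  have := (h1.inv_tendsto_atTop).const_mul C
  simpa using this

lemma Decay.tendsto_t (hd : Decay f) (s : ℝ) :
    Tendsto (fun t => f s t) atTop (𝓝 0) := by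
  obtain ⟨C, hC0, hC⟩ := hd.bound1
  refine squeeze_zero_norm' (a := fun t => C * (1 + |s| + t)⁻¹) ?_ ?_
  · exact (eventually_ge_atTop (0:ℝ)).mono fun t ht => by
      rw [Real.norm_eq_abs]; exact hC s t ht
  · have h1 : Tendsto (fun t : ℝ => 1 + |s| + t) atTop atTop :=
      tendsto_atTop_add_const_left atTop (1 + |s|) tendsto_id
    have := (h1.inv_tendsto_atTop).const_mul C
    simpa using this

/-! ### Calculus atoms -/

/-- the uncurried function -/
def Fu (u : ℝ → ℝ → ℝ) : ℝ × ℝ → ℝ := fun p => u p.1 p.2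
def Au (u : ℝ → ℝ → ℝ) : ℝ × ℝ → ℝ := fun p => fderiv ℝ (Fu u) p (1, 0)
def Bu (u : ℝ → ℝ → ℝ) : ℝ × ℝ → ℝ := fun p => fderiv ℝ (Fu u) p (0, 1)

variable {u : ℝ → ℝ → ℝ}

lemma hasDerivAt_fst {G : ℝ × ℝ → ℝ} (hG : Differentiable ℝ G) (s t : ℝ) :
    HasDerivAt (fun x => G (x, t)) (fderiv ℝ G (s, t) (1, 0)) s := by
  have hcurve : HasDerivAt (fun x : ℝ => ((x, t) : ℝ × ℝ)) ((1 : ℝ), (0 : ℝ)) s :=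
    (hasDerivAt_id s).prodMk (hasDerivAt_const s t)
  exact (hG (s, t)).hasFDerivAt.comp_hasDerivAt s hcurve

lemma hasDerivAt_snd {G : ℝ × ℝ → ℝ} (hG : Differentiable ℝ G) (s t : ℝ) :
    HasDerivAt (fun y => G (s, y)) (fderiv ℝ G (s, t) (0, 1)) t := by
  have hcurve : HasDerivAt (fun y : ℝ => ((s, y) : ℝ × ℝ)) ((0 : ℝ), (1 : ℝ)) t :=
    (hasDerivAt_const t s).prodMk (hasDerivAt_id t)
  exact (hG (s, t)).hasFDerivAt.comp_hasDerivAt t hcurve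

lemma clm_dir {G : ℝ × ℝ → ℝ} (hG : ∀ n : ℕ, ContDiff ℝ n G) (v : ℝ × ℝ) (n : ℕ) :
    ContDiff ℝ n (fun p => fderiv ℝ G p v) := by
  have h := (hG (n + 1)).fderiv_right (m := n) (by exact_mod_cast le_rfl)
  exact h.clm_apply contDiff_const

section Smooth
variable (hsm : ∀ n : ℕ, ContDiff ℝ n (fun p : ℝ × ℝ => u p.1 p.2))
include hsm

lemma contDiff_Fu (n : ℕ) : ContDiff ℝ n (Fu u) := hsm n

lemma diff_Fu : Differentiable ℝ (Fu u) :=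
  (contDiff_Fu hsm 1).differentiable (by norm_cast)

lemma contDiff_Au (n : ℕ) : ContDiff ℝ n (Au u) := clm_dir (contDiff_Fu hsm) _ n
lemma contDiff_Bu (n : ℕ) : ContDiff ℝ n (Bu u) := clm_dir (contDiff_Fu hsm) _ n

lemma diff_Au : Differentiable ℝ (Au u) := (contDiff_Au hsm 1).differentiable (by norm_cast)
lemma diff_Bu : Differentiable ℝ (Bu u) := (contDiff_Bu hsm 1).differentiable (by norm_cast)

lemma eqA (s t : ℝ) : pd1 u s t = Au u (s, t) :=
  (hasDerivAt_fst (diff_Fu hsm) s t).deriv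

lemma eqB (s t : ℝ) : pd2 u s t = Bu u (s, t) :=
  (hasDerivAt_snd (diff_Fu hsm) s t).deriv

lemma funeqA (t : ℝ) : (fun x => pd1 u x t) = fun x => Au u (x, t) :=
  funext fun x => eqA hsm x t

lemma funeqB (t : ℝ) : (fun x => pd2 u x t) = fun x => Bu u (x, t) :=
  funext fun x => eqB hsm x t

lemma funeqA' (s : ℝ) : (fun y => pd1 u s y) = fun y => Au u (s, y) :=
  funext fun y => eqA hsm s y

lemma funeqB' (s : ℝ) : (fun y => pd2 u s y) = fun y => Bu u (s, y) :=
  funext fun y => eqB hsm s y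

lemma eqA1 (s t : ℝ) : pd1 (pd1 u) s t = fderiv ℝ (Au u) (s, t) (1, 0) := by
  show deriv (fun x => pd1 u x t) s = _
  rw [funeqA hsm t]
  exact (hasDerivAt_fst (diff_Au hsm) s t).deriv

lemma eqM (s t : ℝ) : pd1 (pd2 u) s t = fderiv ℝ (Bu u) (s, t) (1, 0) := by
  show deriv (fun x => pd2 u x t) s = _
  rw [funeqB hsm t]
  exact (hasDerivAt_fst (diff_Bu hsm) s t).deriv

lemma eqB2 (s t : ℝ) : pd2 (pd2 u) s t = fderiv ℝ (Bu u) (s, t) (0, 1) := by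
  show deriv (fun y => pd2 u s y) t = _
  rw [funeqB' hsm s]
  exact (hasDerivAt_snd (diff_Bu hsm) s t).deriv

/-- Clairaut symmetry of second derivatives. -/
lemma symm_eq (p : ℝ × ℝ) :
    fderiv ℝ (Au u) p (0, 1) = fderiv ℝ (Bu u) p (1, 0) := by
  have hφ : Differentiable ℝ (fderiv ℝ (Fu u)) :=
    ((contDiff_Fu hsm 2).fderiv_right (m := 1) (by exact_mod_cast le_rfl)).differentiable
      (by norm_cast)
  have hA : HasFDerivAt (Au u) ((fderiv ℝ (fderiv ℝ (Fu u)) p).flip ((1:ℝ), (0:ℝ))) p := by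
    have := (hφ p).hasFDerivAt.clm_apply (hasFDerivAt_const ((1:ℝ), (0:ℝ)) p)
    simp at this; exact this
  have hB : HasFDerivAt (Bu u) ((fderiv ℝ (fderiv ℝ (Fu u)) p).flip ((0:ℝ), (1:ℝ))) p := by
    have := (hφ p).hasFDerivAt.clm_apply (hasFDerivAt_const ((0:ℝ), (1:ℝ)) p)
    simp at this; exact this
  rw [hA.fderiv, hB.fderiv]
  simp only [ContinuousLinearMap.flip_apply]
  exact second_derivative_symmetric (fun y => (diff_Fu hsm y).hasFDerivAt)
    (hφ p).hasFDerivAt (0, 1) (1, 0)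

/-- derivative atoms -/
lemma D1 (s t : ℝ) : HasDerivAt (fun x => u x t) (pd1 u s t) s := by
  rw [eqA hsm]; exact hasDerivAt_fst (diff_Fu hsm) s t

lemma D2 (s t : ℝ) : HasDerivAt (fun y => u s y) (pd2 u s t) t := by
  rw [eqB hsm]; exact hasDerivAt_snd (diff_Fu hsm) s t

lemma D3 (s t : ℝ) : HasDerivAt (fun x => pd1 u x t) (pd1 (pd1 u) s t) s := by
  rw [eqA1 hsm, funeqA hsm t]; exact hasDerivAt_fst (diff_Au hsm) s t

lemma D5 (s t : ℝ) : HasDerivAt (fun x => pd2 u x t) (pd1 (pd2 u) s t) s := by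
  rw [eqM hsm, funeqB hsm t]; exact hasDerivAt_fst (diff_Bu hsm) s t

lemma D4 (s t : ℝ) : HasDerivAt (fun y => pd1 u s y) (pd1 (pd2 u) s t) t := by
  rw [eqM hsm, funeqA' hsm s, ← symm_eq hsm (s, t)]
  exact hasDerivAt_snd (diff_Au hsm) s t

lemma D6 (s t : ℝ) : HasDerivAt (fun y => pd2 u s y) (pd2 (pd2 u) s t) t := by
  rw [eqB2 hsm, funeqB' hsm s]; exact hasDerivAt_snd (diff_Bu hsm) s t

/-- continuity atoms -/
lemma contU : Continuous fun p : ℝ × ℝ => u p.1 p.2 := (hsm 0).continuous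

lemma contA : Continuous fun p : ℝ × ℝ => pd1 u p.1 p.2 := by
  have : (fun p : ℝ × ℝ => pd1 u p.1 p.2) = Au u := funext fun p => eqA hsm p.1 p.2
  rw [this]; exact (contDiff_Au hsm 0).continuous

lemma contB : Continuous fun p : ℝ × ℝ => pd2 u p.1 p.2 := by
  have : (fun p : ℝ × ℝ => pd2 u p.1 p.2) = Bu u := funext fun p => eqB hsm p.1 p.2
  rw [this]; exact (contDiff_Bu hsm 0).continuous

lemma contA1 : Continuous fun p : ℝ × ℝ => pd1 (pd1 u) p.1 p.2 := by
  have : (fun p : ℝ × ℝ => pd1 (pd1 u) p.1 p.2) = fun p => fderiv ℝ (Au u) p (1, 0) :=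
    funext fun p => eqA1 hsm p.1 p.2
  rw [this]; exact (clm_dir (contDiff_Au hsm) _ 0).continuous

lemma contM : Continuous fun p : ℝ × ℝ => pd1 (pd2 u) p.1 p.2 := by
  have : (fun p : ℝ × ℝ => pd1 (pd2 u) p.1 p.2) = fun p => fderiv ℝ (Bu u) p (1, 0) :=
    funext fun p => eqM hsm p.1 p.2
  rw [this]; exact (clm_dir (contDiff_Bu hsm) _ 0).continuous

lemma contB2 : Continuous fun p : ℝ × ℝ => pd2 (pd2 u) p.1 p.2 := by
  have : (fun p : ℝ × ℝ => pd2 (pd2 u) p.1 p.2) = fun p => fderiv ℝ (Bu u) p (0, 1) :=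
    funext fun p => eqB2 hsm p.1 p.2
  rw [this]; exact (clm_dir (contDiff_Bu hsm) _ 0).continuous

end Smooth

/-! ### The multiplier functions -/

/-- boundary flux in `s` -/
def Pfun (θ σ : ℝ) (u : ℝ → ℝ → ℝ) : ℝ → ℝ → ℝ := fun s t =>
  (-1/2) * (s * (pd1 u s t * pd1 u s t))
  + (-1/2) * (u s t * pd1 u s t)
  + (1/2) * (s * (pd2 u s t * pd2 u s t))
  + (1/2) * (s * (Vpot θ s t * (Vpot θ s t * (u s t * u s t))))
  + (-σ/2) * (s * (u s t * u s t))

/-- `∂ₛ` of `Pfun` -/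
def Pder (θ σ : ℝ) (u : ℝ → ℝ → ℝ) : ℝ → ℝ → ℝ := fun s t =>
  (-1) * (pd1 u s t * pd1 u s t)
  + (-1) * (s * (pd1 u s t * pd1 (pd1 u) s t))
  + (-1/2) * (u s t * pd1 (pd1 u) s t)
  + (1/2) * (pd2 u s t * pd2 u s t)
  + s * (pd2 u s t * pd1 (pd2 u) s t)
  + (1/2) * (Vpot θ s t * (Vpot θ s t * (u s t * u s t)))
  + (-Real.sin θ) * (s * (Vpot θ s t * (u s t * u s t)))
  + s * (Vpot θ s t * (Vpot θ s t * (u s t * pd1 u s t)))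
  + (-σ/2) * (u s t * u s t)
  + (-σ) * (s * (u s t * pd1 u s t))

/-- boundary flux in `t` -/
def Qfun (u : ℝ → ℝ → ℝ) : ℝ → ℝ → ℝ := fun s t =>
  (-1) * (s * (pd1 u s t * pd2 u s t)) + (-1/2) * (u s t * pd2 u s t)

/-- `∂ₜ` of `Qfun` -/
def Qder (u : ℝ → ℝ → ℝ) : ℝ → ℝ → ℝ := fun s t =>
  (-1) * (s * (pd1 (pd2 u) s t * pd2 u s t + pd1 u s t * pd2 (pd2 u) s t))
  + (-1/2) * (pd2 u s t * pd2 u s t + u s t * pd2 (pd2 u) s t)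

section Smooth2
variable (hsm : ∀ n : ℕ, ContDiff ℝ n (fun p : ℝ × ℝ => u p.1 p.2))
include hsm

lemma Pfun_hasDeriv (θ σ : ℝ) (s t : ℝ) :
    HasDerivAt (fun x => Pfun θ σ u x t) (Pder θ σ u s t) s := by
  have hU := D1 hsm s t
  have hA := D3 hsm s t
  have hB := D5 hsm s t
  have hV : HasDerivAt (fun x => Vpot θ x t) (-Real.sin θ) s := by
    unfold Vpot
    simpa [Pi.sub_def] using (hasDerivAt_const s (t * Real.cos θ)).sub
      ((hasDerivAt_id s).mul_const (Real.sin θ))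
  have hid := hasDerivAt_id s
  have H := (((((((hid.mul (hA.mul hA)).const_mul (-1/2 : ℝ)).add
      ((hU.mul hA).const_mul (-1/2 : ℝ))).add
      ((hid.mul (hB.mul hB)).const_mul (1/2 : ℝ))).add
      ((hid.mul (hV.mul (hV.mul (hU.mul hU)))).const_mul (1/2 : ℝ))).add
      ((hid.mul (hU.mul hU)).const_mul (-σ/2 : ℝ))))
  have heq : Pder θ σ u s t =
      -1 / 2 * (1 * (pd1 u s t * pd1 u s t) +
          s * (pd1 (pd1 u) s t * pd1 u s t + pd1 u s t * pd1 (pd1 u) s t)) +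
        -1 / 2 * (pd1 u s t * pd1 u s t + u s t * pd1 (pd1 u) s t) +
        1 / 2 * (1 * (pd2 u s t * pd2 u s t) +
          s * (pd1 (pd2 u) s t * pd2 u s t + pd2 u s t * pd1 (pd2 u) s t)) +
        1 / 2 * (1 * (Vpot θ s t * (Vpot θ s t * (u s t * u s t))) +
          s * (-Real.sin θ * (Vpot θ s t * (u s t * u s t)) +
            Vpot θ s t * (-Real.sin θ * (u s t * u s t) +
              Vpot θ s t * (pd1 u s t * u s t + u s t * pd1 u s t)))) +
        -σ / 2 * (1 * (u s t * u s t) + s * (pd1 u s t * u s t + u s t * pd1 u s t)) := by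
    unfold Pder; ring
  rw [heq]
  exact H

lemma Qfun_hasDeriv (s t : ℝ) :
    HasDerivAt (fun y => Qfun u s y) (Qder u s t) t := by
  have hU := D2 hsm s t
  have hA := D4 hsm s t
  have hB := D6 hsm s t
  exact (((hA.mul hB).const_mul s).const_mul (-1 : ℝ)).add
    ((hU.mul hB).const_mul (-1/2 : ℝ))

end Smooth2

/-! ### Decay of atoms -/

lemma decay_kl {u : ℝ → ℝ → ℝ} (h : SchwartzHalf u) (k l : ℕ) :
    Decay (pd1^[k] (pd2^[l] u)) := by
  intro n
  obtain ⟨C, hC⟩ := h k l n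
  refine ⟨max C 0, le_max_right _ _, fun s t ht => (hC s t ht).trans ?_⟩
  exact mul_le_mul_of_nonneg_right (le_max_left _ _)
    (Real.rpow_nonneg (le_of_lt (base_pos ht)) _)

end VirialAux

open VirialAux Filter MeasureTheory

/-! ### integration framework -/

/-- inner and outer integrability for `intHalf` -/
def Good (f : ℝ → ℝ → ℝ) : Prop :=
  (∀ s : ℝ, IntegrableOn (fun t => f s t) (Set.Ioi (0:ℝ))) ∧
    Integrable (fun s : ℝ => ∫ t in Set.Ioi (0:ℝ), f s t)

lemma good_of {f : ℝ → ℝ → ℝ} (hd : Decay f)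
    (hc : Continuous fun p : ℝ × ℝ => f p.1 p.2) : Good f :=
  ⟨hd.integrableOn_inner hc, by exact (hd.integrable_prod hc).integral_prod_left⟩

lemma Good.add {f g : ℝ → ℝ → ℝ} (hf : Good f) (hg : Good g) :
    Good (fun s t => f s t + g s t) := by
  refine ⟨fun s => (hf.1 s).add (hg.1 s), ?_⟩
  have he : (fun s => ∫ t in Set.Ioi (0:ℝ), (f s t + g s t))
      = fun s => (∫ t in Set.Ioi (0:ℝ), f s t) + ∫ t in Set.Ioi (0:ℝ), g s t :=
    funext fun s => integral_add (hf.1 s) (hg.1 s)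
  rw [he]
  exact hf.2.add hg.2

lemma Good.const_mul {f : ℝ → ℝ → ℝ} (c : ℝ) (hf : Good f) :
    Good (fun s t => c * f s t) := by
  refine ⟨fun s => (hf.1 s).const_mul c, ?_⟩
  have he : (fun s => ∫ t in Set.Ioi (0:ℝ), c * f s t)
      = fun s => c * ∫ t in Set.Ioi (0:ℝ), f s t :=
    funext fun s => integral_const_mul c _
  rw [he]
  exact hf.2.const_mul c

lemma intHalf_add {f g : ℝ → ℝ → ℝ} (hf : Good f) (hg : Good g) :
    intHalf (fun s t => f s t + g s t) = intHalf f + intHalf g := by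
  unfold intHalf
  have he : (fun s => ∫ t in Set.Ioi (0:ℝ), (f s t + g s t))
      = fun s => (∫ t in Set.Ioi (0:ℝ), f s t) + ∫ t in Set.Ioi (0:ℝ), g s t :=
    funext fun s => integral_add (hf.1 s) (hg.1 s)
  rw [he]
  exact integral_add hf.2 hg.2

lemma intHalf_cmul (c : ℝ) (f : ℝ → ℝ → ℝ) :
    intHalf (fun s t => c * f s t) = c * intHalf f := by
  unfold intHalf
  simp_rw [integral_const_mul]

/-- `∫ |∂_s u|² = − sin θ ∫ s V_θ u²`. -/
theorem virial_s (θ : ℝ) (hθ : θ ∈ Set.Ioo 0 (π/2))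
    (u : ℝ → ℝ → ℝ) (σ : ℝ) (hu : IsModelEigen θ u σ) :
    intHalf (fun s t => (pd1 u s t)^2) =
      - Real.sin θ * intHalf (fun s t => s * Vpot θ s t * (u s t)^2) := by
  have hsm := hu.smooth
  have hsch := hu.schwartz
  -- decay of atoms
  have dU : Decay u := by simpa using decay_kl hsch 0 0
  have dA : Decay (pd1 u) := by simpa using decay_kl hsch 1 0
  have dB : Decay (pd2 u) := by simpa using decay_kl hsch 0 1
  have dA1 : Decay (pd1 (pd1 u)) := by
    have := decay_kl hsch 2 0
    simpa [Function.iterate_succ_apply', Function.iterate_zero_apply] using this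
  have dM : Decay (pd1 (pd2 u)) := by
    have := decay_kl hsch 1 1
    simpa [Function.iterate_succ_apply', Function.iterate_zero_apply] using this
  have dB2 : Decay (pd2 (pd2 u)) := by
    have := decay_kl hsch 0 2
    simpa [Function.iterate_succ_apply', Function.iterate_zero_apply] using this
  -- decay of the four integrands
  have dG1 : Decay (fun s t => (pd1 u s t)^2) :=
    (dA.mul dA).congr (fun s t => by ring)
  have dG2 : Decay (fun s t => s * Vpot θ s t * (u s t)^2) :=
    (Decay.mul_s (Decay.mul_V θ (dU.mul dU))).congr (fun s t => by ring)
  have dPf : Decay (Pfun θ σ u) := by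
    have base := ((Decay.mul_s (dA.mul dA)).const_mul (-1/2) |>.add
      (((dU.mul dA).const_mul (-1/2)).add
      (((Decay.mul_s (dB.mul dB)).const_mul (1/2)).add
      (((Decay.mul_s (Decay.mul_V θ (Decay.mul_V θ (dU.mul dU)))).const_mul (1/2)).add
      ((Decay.mul_s (dU.mul dU)).const_mul (-σ/2))))))
    exact base.congr (fun s t => by simp only [Pfun]; try ring)
  have dG3 : Decay (Pder θ σ u) := by
    have base := (((dA.mul dA).const_mul (-1)).add
      (((Decay.mul_s (dA.mul dA1)).const_mul (-1)).add
      (((dU.mul dA1).const_mul (-1/2)).add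
      (((dB.mul dB).const_mul (1/2)).add
      ((Decay.mul_s (dB.mul dM)).add
      (((Decay.mul_V θ (Decay.mul_V θ (dU.mul dU))).const_mul (1/2)).add
      (((Decay.mul_s (Decay.mul_V θ (dU.mul dU))).const_mul (-Real.sin θ)).add
      ((Decay.mul_s (Decay.mul_V θ (Decay.mul_V θ (dU.mul dA)))).add
      (((dU.mul dU).const_mul (-σ/2)).add
      ((Decay.mul_s (dU.mul dA)).const_mul (-σ)))))))))))
    exact base.congr (fun s t => by simp only [Pder]; try ring)
  have dQf : Decay (Qfun u) := by
    have base := ((Decay.mul_s (dA.mul dB)).const_mul (-1)).add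
      ((dU.mul dB).const_mul (-1/2))
    exact base.congr (fun s t => by simp only [Qfun]; try ring)
  have dG4 : Decay (Qder u) := by
    have base := (((Decay.mul_s (dM.mul dB)).const_mul (-1)).add
      (((Decay.mul_s (dA.mul dB2)).const_mul (-1)).add
      (((dB.mul dB).const_mul (-1/2)).add
      ((dU.mul dB2).const_mul (-1/2)))))
    exact base.congr (fun s t => by simp only [Qder]; try ring)
  -- continuity of the integrands
  have cU := contU hsm
  have cA := contA hsm
  have cB := contB hsm
  have cA1 := contA1 hsm
  have cM := contM hsm
  have cB2 := contB2 hsm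
  have cV : Continuous fun p : ℝ × ℝ => Vpot θ p.1 p.2 := by
    simp only [Vpot]; fun_prop
  have cG1 : Continuous fun p : ℝ × ℝ => (pd1 u p.1 p.2)^2 := cA.pow 2
  have cG2 : Continuous fun p : ℝ × ℝ => p.1 * Vpot θ p.1 p.2 * (u p.1 p.2)^2 :=
    (continuous_fst.mul cV).mul (cU.pow 2)
  have cG3 : Continuous fun p : ℝ × ℝ => Pder θ σ u p.1 p.2 := by
    simp only [Pder]
    exact (((((((((continuous_const.mul (cA.mul cA)).add
      (continuous_const.mul (continuous_fst.mul (cA.mul cA1)))).add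
      (continuous_const.mul (cU.mul cA1))).add
      (continuous_const.mul (cB.mul cB))).add
      (continuous_fst.mul (cB.mul cM))).add
      (continuous_const.mul (cV.mul (cV.mul (cU.mul cU))))).add
      (continuous_const.mul (continuous_fst.mul (cV.mul (cU.mul cU))))).add
      (continuous_fst.mul (cV.mul (cV.mul (cU.mul cA))))).add
      (continuous_const.mul (cU.mul cU))).add
      (continuous_const.mul (continuous_fst.mul (cU.mul cA)))
  have cG4 : Continuous fun p : ℝ × ℝ => Qder u p.1 p.2 := by
    simp only [Qder]
    exact ((continuous_const.mul (continuous_fst.mul ((cM.mul cB).add (cA.mul cB2)))).add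
      (continuous_const.mul ((cB.mul cB).add (cU.mul cB2))))
  -- Good instances
  have hG1 : Good (fun s t => (pd1 u s t)^2) := good_of dG1 cG1
  have hG2 : Good (fun s t => s * Vpot θ s t * (u s t)^2) := good_of dG2 cG2
  have hG2c : Good (fun s t => Real.sin θ * (s * Vpot θ s t * (u s t)^2)) :=
    Good.const_mul (Real.sin θ) hG2
  have hG3 : Good (fun s t => Pder θ σ u s t) := good_of dG3 cG3
  have hG4 : Good (fun s t => Qder u s t) := good_of dG4 cG4
  -- pointwise identity
  have hpt : ∀ s t : ℝ, 0 ≤ t →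
      (pd1 u s t)^2 + (Real.sin θ * (s * Vpot θ s t * (u s t)^2)
        + (Pder θ σ u s t + Qder u s t)) = 0 := by
    intro s t ht
    have E := hu.eigen s t ht
    simp only [Hop] at E
    simp only [Pder, Qder]
    linear_combination (s * pd1 u s t + u s t / 2) * E
  -- the integral of the pointwise identity
  have hsum0 : intHalf (fun s t => (pd1 u s t)^2 + (Real.sin θ * (s * Vpot θ s t * (u s t)^2)
      + (Pder θ σ u s t + Qder u s t))) = 0 := by
    simp only [intHalf]
    have hz : ∀ s : ℝ, (∫ t in Set.Ioi (0:ℝ), ((pd1 u s t)^2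
        + (Real.sin θ * (s * Vpot θ s t * (u s t)^2)
        + (Pder θ σ u s t + Qder u s t)))) = 0 := fun s => by
      rw [setIntegral_congr_fun (g := fun _ => (0:ℝ)) measurableSet_Ioi
        (fun t ht => hpt s t (le_of_lt ht))]
      simp
    simp only [hz, integral_zero]
  -- the s-flux integrates to zero
  have hI3 : intHalf (fun s t => Pder θ σ u s t) = 0 := by
    simp only [intHalf]
    have hint : Integrable (Function.uncurry fun s t => Pder θ σ u s t)
        ((volume : Measure ℝ).prod ((volume : Measure ℝ).restrict (Set.Ioi 0))) := by
      exact dG3.integrable_prod cG3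
    rw [integral_integral_swap hint]
    have hz : ∀ t ∈ Set.Ioi (0:ℝ), (∫ s : ℝ, Pder θ σ u s t) = 0 := by
      intro t htt
      have ht : (0:ℝ) ≤ t := le_of_lt htt
      have h := MeasureTheory.integral_of_hasDerivAt_of_tendsto
        (f := fun x => Pfun θ σ u x t) (f' := fun x => Pder θ σ u x t)
        (fun x => Pfun_hasDeriv hsm θ σ x t)
        (dG3.integrable_line cG3 ht)
        (dPf.tendsto_s tendsto_abs_atBot_atTop ht)
        (dPf.tendsto_s tendsto_abs_atTop_atTop ht)
      simpa using h
    rw [setIntegral_congr_fun (g := fun _ => (0:ℝ)) measurableSet_Ioi hz]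
    simp
  -- the t-flux integrates to zero (Neumann boundary condition)
  have hI4 : intHalf (fun s t => Qder u s t) = 0 := by
    simp only [intHalf]
    have hz : ∀ s : ℝ, (∫ t in Set.Ioi (0:ℝ), Qder u s t) = 0 := by
      intro s
      have hQ0 : Qfun u s 0 = 0 := by
        simp only [Qfun]; rw [hu.neumann s]; ring
      have h := MeasureTheory.integral_Ioi_of_hasDerivAt_of_tendsto' (a := (0:ℝ))
        (f := fun t => Qfun u s t) (f' := fun t => Qder u s t) (m := 0)
        (fun t _ => Qfun_hasDeriv hsm s t)
        (dG4.integrableOn_inner cG4 s)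
        (dQf.tendsto_t s)
      rw [h]
      simp [hQ0]
    simp only [hz, integral_zero]
  -- assemble
  have e1 := intHalf_add hG1 (hG2c.add (hG3.add hG4))
  have e2 := intHalf_add hG2c (hG3.add hG4)
  have e3 := intHalf_add hG3 hG4
  have e4 : intHalf (fun s t => Real.sin θ * (s * Vpot θ s t * (u s t)^2))
      = Real.sin θ * intHalf (fun s t => s * Vpot θ s t * (u s t)^2) :=
    intHalf_cmul _ _
  rw [e1, e2, e3, e4, hI3, hI4] at hsum0
  linarith [hsum0]
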